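/- Let U ∈ ℝ^{n×d} and let F = { U X Uᵀ : X ∈ S^d_+ }. Suppose S ∈ S^n satisfies Uᵀ S U ⪰ 0, and B ∈ ℝ^{d×r} satisfies range(B) = null(Uᵀ S U). Then F ∩ S^⊥ = { U B W Bᵀ Uᵀ : W ∈ S^r_+ }. -/

import Mathlib

open Matrix

lemma trace_transpose_mul_self_zero {m k : ℕ} {A : Matrix (Fin m) (Fin k) ℝ}
    (h : (Aᵀ * A).trace = 0) : A = 0 := by
  have h0 : ∑ j, ∑ i, A i j * A i j = 0 := by
    simpa [Matrix.trace, Matrix.diag, Matrix.mul_apply, Matrix.transpose_apply] using h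
  ext i j
  have hnn : ∀ j ∈ Finset.univ, (0:ℝ) ≤ ∑ i, A i j * A i j :=
    fun j _ => Finset.sum_nonneg fun i _ => mul_self_nonneg _
  have h1 := (Finset.sum_eq_zero_iff_of_nonneg hnn).1 h0 j (Finset.mem_univ j)
  have h2 := (Finset.sum_eq_zero_iff_of_nonneg
    (fun i _ => mul_self_nonneg (A i j))).1 h1 i (Finset.mem_univ i)
  simpa using mul_self_eq_zero.1 h2

theorem face_inter_perp_eq
    {n d r : ℕ} (U : Matrix (Fin n) (Fin d) ℝ)
    (S : Matrix (Fin n) (Fin n) ℝ) (hS : S.IsSymm)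
    (hSU : (Uᵀ * S * U).PosSemidef)
    (B : Matrix (Fin d) (Fin r) ℝ)
    (hB : LinearMap.range B.mulVecLin = LinearMap.ker (Uᵀ * S * U).mulVecLin) :
    {M : Matrix (Fin n) (Fin n) ℝ |
        (∃ X : Matrix (Fin d) (Fin d) ℝ, X.PosSemidef ∧ M = U * X * Uᵀ) ∧
        (S * M).trace = 0} =
    {M : Matrix (Fin n) (Fin n) ℝ |
        ∃ W : Matrix (Fin r) (Fin r) ℝ, W.PosSemidef ∧
          M = U * B * W * Bᵀ * Uᵀ} := by
  set A := Uᵀ * S * U with hA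
  -- basic trace identity
  have key : ∀ X : Matrix (Fin d) (Fin d) ℝ,
      (S * (U * X * Uᵀ)).trace = (A * X).trace := by
    intro X
    rw [hA, ← Matrix.mul_assoc, Matrix.trace_mul_cycle]
    simp only [Matrix.mul_assoc]
  ext M
  simp only [Set.mem_setOf_eq]
  constructor
  · rintro ⟨⟨X, hX, rfl⟩, htr⟩
    have htrA : (A * X).trace = 0 := by rw [← key X]; exact htr
    -- square roots
    set Y := (open MatrixOrder in CFC.sqrt X) with hYdef
    have hYY : Y * Y = X := by open MatrixOrder in exact CFC.sqrt_mul_sqrt_self X hX.nonneg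
    have hYsymm : Yᵀ = Y := by
      rw [← conjTranspose_eq_transpose_of_trivial]
      open MatrixOrder in exact (CFC.sqrt_nonneg X).posSemidef.1
    set Q := (open MatrixOrder in CFC.sqrt A) with hQdef
    have hQQ : Q * Q = A := by open MatrixOrder in exact CFC.sqrt_mul_sqrt_self A hSU.nonneg
    have hQsymm : Qᵀ = Q := by
      rw [← conjTranspose_eq_transpose_of_trivial]
      open MatrixOrder in exact (CFC.sqrt_nonneg A).posSemidef.1
    have hR : Q * Y = 0 := by
      apply trace_transpose_mul_self_zero
      have : (Q * Y)ᵀ * (Q * Y) = Yᵀ * (A * Y) := by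
        rw [Matrix.transpose_mul, hYsymm, hQsymm, ← hQQ]
        simp only [Matrix.mul_assoc]
      rw [this, Matrix.trace_mul_comm, Matrix.mul_assoc, hYsymm, hYY]
      exact htrA
    have hAY : A * Y = 0 := by
      rw [← hQQ, Matrix.mul_assoc, hR, Matrix.mul_zero]
    -- columns of Y lie in range of B
    have hcol : ∀ j, ∃ c : Fin r → ℝ, B.mulVec c = fun i => Y i j := by
      intro j
      have hmem : (fun i => Y i j) ∈ LinearMap.ker A.mulVecLin := by
        rw [LinearMap.mem_ker]
        have : A.mulVec (fun i => Y i j) = fun i => (A * Y) i j := by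
          ext i; simp [Matrix.mulVec, Matrix.mul_apply, dotProduct]
        rw [Matrix.mulVecLin_apply, this, hAY]
        ext i; simp
      rw [← hB] at hmem
      obtain ⟨c, hc⟩ := hmem
      exact ⟨c, hc⟩
    choose C hC using hcol
    set Cm : Matrix (Fin r) (Fin d) ℝ := Matrix.of fun i j => C j i with hCm
    have hBC : B * Cm = Y := by
      ext i j
      have := congrFun (hC j) i
      simpa [Matrix.mul_apply, Matrix.mulVec, dotProduct, hCm] using this
    refine ⟨Cm * Cmᵀ, ?_, ?_⟩
    · have := Matrix.posSemidef_self_mul_conjTranspose Cm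
      rwa [conjTranspose_eq_transpose_of_trivial] at this
    · have hX' : X = B * (Cm * Cmᵀ) * Bᵀ := by
        rw [← hYY]
        nth_rewrite 2 [← hYsymm]
        rw [← hBC, Matrix.transpose_mul]
        simp only [Matrix.mul_assoc]
      rw [hX']
      simp only [Matrix.mul_assoc]
  · rintro ⟨W, hW, rfl⟩
    have hAB : A * B = 0 := by
      ext i j
      have hmem : B.mulVecLin (Pi.single j 1) ∈ LinearMap.ker A.mulVecLin := by
        rw [← hB]; exact LinearMap.mem_range_self _ _
      rw [LinearMap.mem_ker] at hmem
      have hcolB : B.mulVecLin (Pi.single j 1) = fun k => B k j := by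
        ext k; simp [Matrix.mulVecLin_apply, Matrix.mulVec_single]
      have : A.mulVec (fun k => B k j) = 0 := by
        rw [← hcolB]
        simpa [Matrix.mulVecLin_apply] using hmem
      have h2 := congrFun this i
      simpa [Matrix.mulVec, Matrix.mul_apply, dotProduct] using h2
    have hXps : (B * W * Bᵀ).PosSemidef := by
      have := hW.mul_mul_conjTranspose_same B
      rwa [conjTranspose_eq_transpose_of_trivial] at this
    refine ⟨⟨B * W * Bᵀ, hXps, by simp only [Matrix.mul_assoc]⟩, ?_⟩
    have hM : U * B * W * Bᵀ * Uᵀ = U * (B * W * Bᵀ) * Uᵀ := by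
      simp only [Matrix.mul_assoc]
    rw [hM, key (B * W * Bᵀ)]
    rw [← Matrix.mul_assoc, ← Matrix.mul_assoc, hAB]
    simp
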